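/- For integers m ≥ 0 and n, k, s ≥ 1, one has x₁^m ш (x₀^n x₁^k x₀^s) = Σ_{m₁+m₂+m₃=m, m_i ≥ 0} C(m₂+k-1, k-1) · 𝔅_{m₁+1}^{n-1} x₀ x₁^{m₂+k} 𝔅_{m₃+1}^{s}, an identity of multisets of words, where a binomial coefficient c multiplying a multiset means the multiset repeated c times. -/

import Mathlib

/-- The shuffle product of two words, as a multiset of words. -/
def shuffle {X : Type*} : List X → List X → Multiset (List X)
  | u, [] => {u}
  | [], v => {v}
  | a :: u, b :: v =>
      (shuffle u (b :: v)).map (a :: ·) + (shuffle (a :: u) v).map (b :: ·)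
termination_by u v => u.length + v.length

/-- The two-letter alphabet `X = {x₀, x₁}`. -/
def x0 : Bool := false
def x1 : Bool := true

/-- `𝔅_r^m`: the multiset of all words `x₀^{m₁} x₁ x₀^{m₂} x₁ ⋯ x₁ x₀^{m_r}`
with `m₁ + ⋯ + m_r = m`, `m_i ≥ 0`. -/
def B (r m : ℕ) : Multiset (List Bool) :=
  (Finset.Nat.antidiagonalTuple r m).val.map fun f =>
    List.intercalate [x1] (List.ofFn fun i => List.replicate (f i) x0)

/-- `S w T`: the multiset of all concatenations `u ++ w ++ v` with `u ∈ S`, `v ∈ T`,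
counted with multiplicity. -/
def msConcat {X : Type*} (S : Multiset (List X)) (w : List X) (T : Multiset (List X)) :
    Multiset (List X) :=
  S.bind fun u => T.map fun v => u ++ w ++ v

/-! ### auxiliary lemmas -/

@[simp] lemma shuffle_nil_right {X : Type*} (u : List X) : shuffle u [] = {u} := by
  cases u <;> simp [shuffle]

@[simp] lemma shuffle_nil_left {X : Type*} (v : List X) : shuffle [] v = {v} := by
  cases v <;> simp [shuffle]

lemma shuffle_cons_cons {X : Type*} (a b : X) (u v : List X) :
    shuffle (a :: u) (b :: v) =
      (shuffle u (b :: v)).map (a :: ·) + (shuffle (a :: u) v).map (b :: ·) := by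
  simp [shuffle]

/-- the word corresponding to a tuple of block sizes -/
def word {r : ℕ} (f : Fin r → ℕ) : List Bool :=
  List.intercalate [x1] (List.ofFn fun i => List.replicate (f i) x0)

lemma intercalate_cons (L : List Bool) (Ls : List (List Bool)) (h : Ls ≠ []) :
    List.intercalate [x1] (L :: Ls) = L ++ x1 :: List.intercalate [x1] Ls := by
  cases Ls with
  | nil => exact absurd rfl h
  | cons M Ms => simp [List.intercalate]

lemma word_cons {r : ℕ} (a : ℕ) (f : Fin (r + 1) → ℕ) :
    word (Fin.cons a f) = List.replicate a x0 ++ x1 :: word f := by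
  unfold word
  rw [List.ofFn_succ]
  simp only [Fin.cons_zero, Fin.cons_succ]
  rw [intercalate_cons]
  apply List.ne_nil_of_length_pos
  simp

lemma B_eq_sum (r m : ℕ) :
    B r m = ∑ f ∈ Finset.Nat.antidiagonalTuple r m, ({word f} : Multiset (List Bool)) := by
  rw [Finset.sum_eq_multiset_sum]
  rw [show (fun f : Fin r → ℕ => ({word f} : Multiset (List Bool)))
      = (fun w => ({w} : Multiset (List Bool))) ∘ word from rfl]
  rw [← Multiset.map_map, Multiset.sum_map_singleton]
  rfl

lemma adT_val_succ (k n : ℕ) :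
    (Finset.Nat.antidiagonalTuple (k + 1) n).val
      = (Finset.HasAntidiagonal.antidiagonal n).val.bind
          (fun p => (Finset.Nat.antidiagonalTuple k p.2).val.map (Fin.cons p.1)) := by
  have h1 : (Finset.Nat.antidiagonalTuple (k + 1) n).val
      = ((List.Nat.antidiagonalTuple (k + 1) n : List (Fin (k + 1) → ℕ)) : Multiset _) := rfl
  have h2 : (Finset.HasAntidiagonal.antidiagonal n).val = ((List.Nat.antidiagonal n : List (ℕ × ℕ)) : Multiset _) :=
    rfl
  have h3 : ∀ p : ℕ × ℕ, (Finset.Nat.antidiagonalTuple k p.2).val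
      = ((List.Nat.antidiagonalTuple k p.2 : List (Fin k → ℕ)) : Multiset _) := fun _ => rfl
  rw [h1, h2]
  simp only [h3, Multiset.map_coe, Multiset.coe_bind]
  rw [List.Nat.antidiagonalTuple]

lemma sum_adT_succ {M : Type*} [AddCommMonoid M] (k n : ℕ) (g : (Fin (k + 1) → ℕ) → M) :
    ∑ f ∈ Finset.Nat.antidiagonalTuple (k + 1) n, g f
      = ∑ p ∈ Finset.HasAntidiagonal.antidiagonal n,
          ∑ f ∈ Finset.Nat.antidiagonalTuple k p.2, g (Fin.cons p.1 f) := by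
  simp only [Finset.sum_eq_multiset_sum, adT_val_succ, Multiset.map_bind, Multiset.sum_bind,
    Multiset.map_map, Function.comp_def]

lemma ms_map_finset_sum {α β ι : Type*} (s : Finset ι) (F : ι → Multiset α) (g : α → β) :
    (∑ i ∈ s, F i).map g = ∑ i ∈ s, (F i).map g := by
  exact map_sum (Multiset.mapAddMonoidHom g) F s

lemma intercalate_nil_blocks (r : ℕ) :
    List.intercalate [x1] (List.replicate (r + 1) ([] : List Bool)) = List.replicate r x1 := by
  induction r with
  | zero => simp [List.intercalate]
  | succ r ih =>
    rw [List.replicate_succ, intercalate_cons _ _ (by simp), ih]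
    simp [List.replicate_succ]

lemma B_one (m : ℕ) : B 1 m = {List.replicate m x0} := by
  rw [B, Finset.Nat.antidiagonalTuple_one]
  simp [List.intercalate, List.ofFn_succ]

lemma B_zero_succ (m : ℕ) : B 0 (m + 1) = 0 := by
  rw [B, Finset.Nat.antidiagonalTuple_zero_succ]
  rfl

lemma B_zero_right (r : ℕ) : B (r + 1) 0 = {List.replicate r x1} := by
  rw [B, Finset.Nat.antidiagonalTuple_zero_right]
  have : (List.ofFn fun i : Fin (r + 1) => List.replicate ((0 : Fin (r + 1) → ℕ) i) x0)
      = List.replicate (r + 1) ([] : List Bool) := by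
    simp [List.eq_replicate_iff, List.mem_ofFn]
  simp only [Finset.singleton_val, Multiset.map_singleton, this, intercalate_nil_blocks]

lemma B_succ_succ (r m : ℕ) :
    B (r + 2) m = ∑ p ∈ Finset.HasAntidiagonal.antidiagonal m,
      (B (r + 1) p.2).map (fun w => List.replicate p.1 x0 ++ x1 :: w) := by
  rw [B_eq_sum, sum_adT_succ]
  refine Finset.sum_congr rfl fun p _ => ?_
  rw [B_eq_sum, ms_map_finset_sum]
  refine Finset.sum_congr rfl fun f _ => ?_
  rw [Multiset.map_singleton, word_cons]

lemma B_split (r m : ℕ) :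
    B (r + 1) (m + 1) = (B (r + 1) m).map (x0 :: ·) + (B r (m + 1)).map (x1 :: ·) := by
  cases r with
  | zero => simp [B_one, B_zero_succ, List.replicate_succ]
  | succ r =>
    rw [B_succ_succ, Finset.Nat.sum_antidiagonal_succ]
    have h0 : (B (r + 1) (m + 1)).map (fun w => List.replicate 0 x0 ++ x1 :: w)
        = (B (r + 1) (m + 1)).map (x1 :: ·) := by
      simp
    have h1 : ∀ p : ℕ × ℕ,
        (B (r + 1) p.2).map (fun w => List.replicate (p.1 + 1) x0 ++ x1 :: w)
          = ((B (r + 1) p.2).map (fun w => List.replicate p.1 x0 ++ x1 :: w)).map (x0 :: ·) := by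
      intro p
      rw [Multiset.map_map]
      refine Multiset.map_congr rfl fun w _ => ?_
      simp [List.replicate_succ]
    simp only [h0, h1, ← ms_map_finset_sum, ← B_succ_succ]
    exact add_comm _ _

lemma shuffle_N (m s : ℕ) :
    shuffle (List.replicate m x1) (List.replicate s x0) = B (m + 1) s := by
  induction m generalizing s with
  | zero => simp [B_one]
  | succ m ih =>
    induction s with
    | zero => simp [B_zero_right]
    | succ s ihs =>
      have e1 : List.replicate (m + 1) x1 = x1 :: List.replicate m x1 := rfl
      have e2 : List.replicate (s + 1) x0 = x0 :: List.replicate s x0 := rfl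
      calc shuffle (List.replicate (m + 1) x1) (List.replicate (s + 1) x0)
          = (shuffle (List.replicate m x1) (List.replicate (s + 1) x0)).map (x1 :: ·)
            + (shuffle (List.replicate (m + 1) x1) (List.replicate s x0)).map (x0 :: ·) := by
            rw [e1, e2, shuffle_cons_cons, ← e2, ← e1]
        _ = (B (m + 1) (s + 1)).map (x1 :: ·) + (B (m + 2) s).map (x0 :: ·) := by
            rw [ih, ihs]
        _ = B (m + 2) (s + 1) := (B_split (m + 1) s).symm ▸ add_comm _ _

lemma map_x1_cons_rep (j : ℕ) (T : Multiset (List Bool)) :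
    (T.map (fun w => List.replicate j x1 ++ w)).map (x1 :: ·)
      = T.map (fun w => List.replicate (j + 1) x1 ++ w) := by
  rw [Multiset.map_map]; rfl

lemma step_M (k a : ℕ) (T : Multiset (List Bool)) :
    Multiset.map (x1 :: ·)
        (Nat.choose (a + (k + 1)) (k + 1) •
          T.map (fun w => List.replicate (a + (k + 1) + 1) x1 ++ w))
      + Multiset.map (x1 :: ·)
          (Nat.choose (a + 1 + k) k •
            T.map (fun w => List.replicate (a + 1 + k + 1) x1 ++ w))
      = Nat.choose (a + 1 + (k + 1)) (k + 1) •
          T.map (fun w => List.replicate (a + 1 + (k + 1) + 1) x1 ++ w) := by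
  rw [Multiset.map_nsmul, Multiset.map_nsmul, map_x1_cons_rep, map_x1_cons_rep]
  have e1 : a + (k + 1) + 1 + 1 = a + 1 + (k + 1) + 1 := by omega
  have e2 : a + 1 + k + 1 + 1 = a + 1 + (k + 1) + 1 := by omega
  rw [e1, e2, ← add_smul]
  congr 1
  have e3 : a + 1 + (k + 1) = (a + k + 1) + 1 := by omega
  have e4 : a + (k + 1) = a + k + 1 := by omega
  have e5 : a + 1 + k = a + k + 1 := by omega
  rw [e3, e4, e5, add_comm]
  exact (Nat.choose_succ_succ (a + k + 1) k).symm

lemma shuffle_M (m k s : ℕ) :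
    shuffle (List.replicate m x1) (List.replicate (k + 1) x1 ++ List.replicate s x0)
      = ∑ p ∈ Finset.HasAntidiagonal.antidiagonal m,
          Nat.choose (p.1 + k) k •
            (B (p.2 + 1) s).map (fun w => List.replicate (p.1 + k + 1) x1 ++ w) := by
  induction m generalizing k with
  | zero => simp [B_one]
  | succ m ih =>
    induction k with
    | zero =>
      have e1 : List.replicate (m + 1) x1 = x1 :: List.replicate m x1 := rfl
      have e2 : List.replicate (0 + 1) x1 ++ List.replicate s x0
          = x1 :: List.replicate s x0 := rfl
      rw [e1, e2, shuffle_cons_cons, ← e2, ← e1, ih 0, shuffle_N]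
      simp only [Nat.add_zero, Nat.zero_add, Nat.choose_zero_right, one_smul,
        Finset.Nat.sum_antidiagonal_succ, ms_map_finset_sum, Multiset.map_map]
      rw [add_comm]
      rfl
    | succ k ihk =>
      have e1 : List.replicate (m + 1) x1 = x1 :: List.replicate m x1 := rfl
      have e2 : List.replicate (k + 1 + 1) x1 ++ List.replicate s x0
          = x1 :: (List.replicate (k + 1) x1 ++ List.replicate s x0) := rfl
      rw [e1, e2, shuffle_cons_cons, ← e1, ← e2, ih (k + 1), ihk]
      simp only [Finset.Nat.sum_antidiagonal_succ, Multiset.map_add, ms_map_finset_sum]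
      rw [add_left_comm]
      have hH : Multiset.map (x1 :: ·)
          (Nat.choose (0 + k) k •
            (B (m + 1 + 1) s).map (fun w => List.replicate (0 + k + 1) x1 ++ w))
          = Nat.choose (0 + (k + 1)) (k + 1) •
              (B (m + 1 + 1) s).map (fun w => List.replicate (0 + (k + 1) + 1) x1 ++ w) := by
        simp only [Nat.zero_add, Nat.choose_self, one_smul]
        rw [Multiset.map_map]
        rfl
      rw [hH]
      congr 1
      rw [← Finset.sum_add_distrib]
      exact Finset.sum_congr rfl fun p _ => step_M k p.1 (B (p.2 + 1) s)

lemma msConcat_zero_left (w : List Bool) (T : Multiset (List Bool)) :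
    msConcat (0 : Multiset (List Bool)) w T = 0 :=
  Multiset.zero_bind _

lemma msConcat_add_left (S1 S2 : Multiset (List Bool)) (w : List Bool)
    (T : Multiset (List Bool)) :
    msConcat (S1 + S2) w T = msConcat S1 w T + msConcat S2 w T :=
  Multiset.add_bind _ _ _

lemma msConcat_singleton_left (u w : List Bool) (T : Multiset (List Bool)) :
    msConcat {u} w T = T.map (fun v => u ++ w ++ v) :=
  Multiset.singleton_bind _ _

lemma msConcat_map_cons (c : Bool) (S : Multiset (List Bool)) (w : List Bool)
    (T : Multiset (List Bool)) :
    msConcat (S.map (c :: ·)) w T = (msConcat S w T).map (c :: ·) := by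
  rw [msConcat, Multiset.bind_map, msConcat, Multiset.map_bind]
  refine Multiset.bind_congr fun u _ => ?_
  rw [Multiset.map_map]
  rfl

lemma msConcat_B_one_zero (j : ℕ) (T : Multiset (List Bool)) :
    msConcat (B 1 0) (x0 :: List.replicate j x1) T
      = (T.map (fun w => List.replicate j x1 ++ w)).map (x0 :: ·) := by
  rw [B_one, msConcat_singleton_left, Multiset.map_map]
  rfl

lemma msConcat_B_zero_succ_left (j : ℕ) (w : List Bool) (T : Multiset (List Bool)) :
    msConcat (B (j + 2) 0) w T = (msConcat (B (j + 1) 0) w T).map (x1 :: ·) := by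
  simp only [B_zero_right, msConcat_singleton_left, Multiset.map_map]
  rfl

lemma shuffle_L (m n k s : ℕ) :
    shuffle (List.replicate m x1)
        (List.replicate (n + 1) x0 ++ List.replicate (k + 1) x1 ++ List.replicate s x0)
      = ∑ p ∈ Finset.HasAntidiagonal.antidiagonal m, ∑ q ∈ Finset.HasAntidiagonal.antidiagonal p.2,
          Nat.choose (q.1 + k) k •
            msConcat (B (p.1 + 1) n) (x0 :: List.replicate (q.1 + k + 1) x1)
              (B (q.2 + 1) s) := by
  induction m generalizing n with
  | zero =>
    simp [B_one, msConcat_singleton_left, List.replicate_succ', List.append_assoc]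
  | succ m ih =>
    induction n with
    | zero =>
      have e1 : List.replicate (m + 1) x1 = x1 :: List.replicate m x1 := rfl
      have e2 : List.replicate (0 + 1) x0 ++ List.replicate (k + 1) x1 ++ List.replicate s x0
          = x0 :: (List.replicate (k + 1) x1 ++ List.replicate s x0) := rfl
      rw [e1, e2, shuffle_cons_cons, ← e1, ← e2, ih 0, shuffle_M]
      simp only [Finset.Nat.sum_antidiagonal_succ, Multiset.map_add, ms_map_finset_sum,
        Multiset.map_nsmul, msConcat_B_zero_succ_left, msConcat_B_one_zero, Nat.zero_add]
      rw [add_comm]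
    | succ n ihn =>
      have e1 : List.replicate (m + 1) x1 = x1 :: List.replicate m x1 := rfl
      have e2 : List.replicate (n + 1 + 1) x0 ++ List.replicate (k + 1) x1 ++ List.replicate s x0
          = x0 :: (List.replicate (n + 1) x0 ++ List.replicate (k + 1) x1
              ++ List.replicate s x0) := rfl
      rw [e1, e2, shuffle_cons_cons, ← e1, ← e2, ih (n + 1), ihn]
      have hsplit : ∀ a b c : ℕ,
          msConcat (B (a + 1) (n + 1)) (x0 :: List.replicate (b + k + 1) x1) (B (c + 1) s)
            = (msConcat (B (a + 1) n) (x0 :: List.replicate (b + k + 1) x1)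
                (B (c + 1) s)).map (x0 :: ·)
              + (msConcat (B a (n + 1))
                  (x0 :: List.replicate (b + k + 1) x1) (B (c + 1) s)).map (x1 :: ·) := by
        intro a b c
        rw [B_split, msConcat_add_left, msConcat_map_cons, msConcat_map_cons]
      simp only [hsplit, smul_add, Finset.sum_add_distrib,
        Finset.Nat.sum_antidiagonal_succ, B_zero_succ, msConcat_zero_left,
        Multiset.map_zero, smul_zero, Finset.sum_const_zero, zero_add, add_zero,
        ms_map_finset_sum, Multiset.map_nsmul, Multiset.map_add]
      abel

theorem shuffle_x1_pow_x0x1x0 (m n k s : ℕ) (hn : 1 ≤ n) (hk : 1 ≤ k) (hs : 1 ≤ s) :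
    shuffle (List.replicate m x1)
        (List.replicate n x0 ++ List.replicate k x1 ++ List.replicate s x0) =
      ∑ f ∈ Finset.Nat.antidiagonalTuple 3 m,
        Nat.choose (f 1 + k - 1) (k - 1) •
          msConcat (B (f 0 + 1) (n - 1)) (x0 :: List.replicate (f 1 + k) x1)
            (B (f 2 + 1) s) := by
  obtain ⟨n, rfl⟩ : ∃ n', n = n' + 1 := ⟨n - 1, (Nat.succ_pred_eq_of_pos hn).symm⟩
  obtain ⟨k, rfl⟩ : ∃ k', k = k' + 1 := ⟨k - 1, (Nat.succ_pred_eq_of_pos hk).symm⟩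
  rw [sum_adT_succ 2 m, shuffle_L m n k s]
  refine Finset.sum_congr rfl fun p _ => ?_
  rw [sum_adT_succ 1 p.2]
  refine Finset.sum_congr rfl fun q _ => ?_
  rw [Finset.Nat.antidiagonalTuple_one, Finset.sum_singleton]
  have h2 : (Fin.cons p.1 (Fin.cons q.1 ![q.2]) : Fin 3 → ℕ) (2 : Fin 3) = q.2 := rfl
  simp [h2, Fin.cons_zero, Fin.cons_succ, Matrix.cons_val_zero, Matrix.cons_val_one,
    Matrix.head_cons, Nat.add_succ_sub_one, ← Nat.add_assoc]
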